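/- Let Ξ be a real vector space with antisymmetric bilinear form σ, and let χ : Ξ → ℂ be a normalized σ-twisted positive definite function (i.e. χ(0)=1 and for every finite family ξ₁,…,ξ_N the matrix M_{kℓ} = χ(ξ_ℓ − ξ_k)·exp(−(i/2)σ(ξ_k,ξ_ℓ)) is positive semidefinite). If |χ(η)| = 1 for some η, then for all ξ ∈ Ξ one has χ(ξ+η) = χ(ξ)·χ(η)·exp((i/2)σ(ξ,η)). -/

import Mathlib

open Complex BigOperators

/-- The quadratic form associated to the σ-twisted matrix
`M_{kℓ} = χ(ξ_ℓ − ξ_k) · exp(−(i/2) σ(ξ_k, ξ_ℓ))`. -/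
noncomputable def twistedSum {Ξ : Type*} [AddCommGroup Ξ] (σ : Ξ → Ξ → ℝ) (χ : Ξ → ℂ)
    {N : ℕ} (ξ : Fin N → Ξ) (c : Fin N → ℂ) : ℂ :=
  ∑ k, ∑ l, (starRingEnd ℂ) (c k) * c l * χ (ξ l - ξ k) *
    Complex.exp (-(Complex.I / 2) * ((σ (ξ k) (ξ l) : ℝ) : ℂ))

/-- `χ` is σ-twisted positive definite: every matrix
`M_{kℓ} = χ(ξ_ℓ − ξ_k) exp(−(i/2)σ(ξ_k,ξ_ℓ))` is positive semidefinite, expressed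
via nonnegativity of the associated quadratic form. -/
def IsTwistedPosDef {Ξ : Type*} [AddCommGroup Ξ] (σ : Ξ → Ξ → ℝ) (χ : Ξ → ℂ) : Prop :=
  ∀ (N : ℕ) (ξ : Fin N → Ξ) (c : Fin N → ℂ),
    0 ≤ (twistedSum σ χ ξ c).re ∧ (twistedSum σ χ ξ c).im = 0

/-- If χ is a normalized σ-twisted positive definite function on a real
vector space with antisymmetric bilinear form σ, and |χ(η)| = 1, then
χ(ξ+η) = χ(ξ)·χ(η)·exp((i/2)σ(ξ,η)) for all ξ. -/
theorem twisted_posdef_mul_of_abs_one {Ξ : Type*} [AddCommGroup Ξ] [Module ℝ Ξ]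
    (σ : Ξ →ₗ[ℝ] Ξ →ₗ[ℝ] ℝ) (hσ : ∀ ξ η : Ξ, σ ξ η = - σ η ξ)
    (χ : Ξ → ℂ) (hχ : IsTwistedPosDef (fun ξ η => σ ξ η) χ) (hnorm : χ 0 = 1)
    (η : Ξ) (hη : ‖χ η‖ = 1) :
    ∀ ξ : Ξ, χ (ξ + η) = χ ξ * χ η * Complex.exp ((Complex.I / 2) * ((σ ξ η : ℝ) : ℂ)) := by
  -- Hermitian symmetry: χ(−ζ) = conj (χ ζ)
  have hherm : ∀ ζ : Ξ, χ (-ζ) = (starRingEnd ℂ) (χ ζ) := by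
    intro ζ
    have hzz : σ ζ ζ = 0 := by have := hσ ζ ζ; linarith
    have h1 := (hχ 2 ![0, ζ] ![1, 1]).2
    have h2 := (hχ 2 ![0, ζ] ![1, Complex.I]).2
    simp only [twistedSum, Fin.sum_univ_two, Matrix.cons_val_zero, Matrix.cons_val_one,
      Matrix.head_cons, sub_self, sub_zero, zero_sub, map_zero, LinearMap.zero_apply,
      LinearMap.map_zero, hzz, hnorm, Complex.ofReal_zero, mul_zero, Complex.exp_zero,
      mul_one, map_one, one_mul, neg_zero, Complex.conj_I] at h1 h2
    simp only [Complex.add_im, Complex.mul_im, Complex.neg_re, Complex.neg_im, Complex.I_re,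
      Complex.I_im, Complex.one_im, Complex.one_re, Complex.mul_re] at h1 h2
    apply Complex.ext
    · simp only [Complex.conj_re]; linarith
    · simp only [Complex.conj_im]; linarith
  intro ξ
  have hηη : σ η η = 0 := by have := hσ η η; linarith
  have hdd : σ (ξ + η) (ξ + η) = 0 := by have := hσ (ξ + η) (ξ + η); linarith
  have h12 : σ η (ξ + η) = -σ ξ η := by
    have h1 := hσ η ξ
    simp [map_add, hηη]
    linarith
  have h21 : σ (ξ + η) η = σ ξ η := by
    simp [LinearMap.add_apply, map_add, hηη]
  have hsub : η - (ξ + η) = -ξ := by abel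
  set A := χ η with hA
  set z := χ ξ with hz
  set B := χ (ξ + η) with hB
  set v := Complex.exp (-(Complex.I / 2) * ((σ ξ η : ℝ) : ℂ)) with hv
  set u := Complex.exp ((Complex.I / 2) * ((σ ξ η : ℝ) : ℂ)) with hu
  set w := (starRingEnd ℂ) z * v - A * (starRingEnd ℂ) B with hw
  have h := (hχ 3 ![0, η, ξ + η] ![A, -1, w]).1
  simp only [twistedSum, Fin.sum_univ_three, Matrix.cons_val_zero, Matrix.cons_val_one,
    Matrix.head_cons, Matrix.cons_val_two, Matrix.tail_cons, sub_self, sub_zero, zero_sub,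
    map_zero, LinearMap.zero_apply, LinearMap.map_zero, hηη, hdd, h12, h21, hnorm,
    add_sub_cancel_right, hsub, hherm, Complex.ofReal_zero, mul_zero, Complex.exp_zero,
    mul_one, map_one, one_mul, Complex.ofReal_neg, mul_neg, neg_neg, neg_mul, map_neg,
    neg_zero] at h
  rw [← hA, ← hz, ← hB,
    show -(Complex.I / 2 * ((σ ξ η : ℝ) : ℂ)) = -(Complex.I / 2) * ((σ ξ η : ℝ) : ℂ) by ring,
    ← hv, ← hu] at h
  have hcv : (starRingEnd ℂ) v = u := by
    rw [hv, hu, ← Complex.exp_conj]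
    congr 1
    simp only [map_neg, map_mul, map_div₀, Complex.conj_I, Complex.conj_ofReal, map_ofNat]
    ring
  have hcu : (starRingEnd ℂ) u = v := by
    rw [hv, hu, ← Complex.exp_conj]
    congr 1
    simp only [map_mul, map_div₀, Complex.conj_I, Complex.conj_ofReal, map_ofNat]
    ring
  have huv : u * v = 1 := by
    rw [hu, hv, ← Complex.exp_add,
      show Complex.I / 2 * ((σ ξ η : ℝ) : ℂ) + -(Complex.I / 2) * ((σ ξ η : ℝ) : ℂ) = 0 by ring,
      Complex.exp_zero]
  have hAA : (starRingEnd ℂ) A * A = 1 := by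
    rw [mul_comm, Complex.mul_conj, ← Complex.sq_norm, hη]
    norm_num
  rw [hw] at h
  simp only [map_sub, map_mul, Complex.conj_conj, hcv, hcu] at h
  have hEq : (starRingEnd ℂ) A * A + -((starRingEnd ℂ) A * A) +
          (starRingEnd ℂ) A * ((starRingEnd ℂ) z * v - A * (starRingEnd ℂ) B) * B +
          (-(A * (starRingEnd ℂ) A) + 1 + -(((starRingEnd ℂ) z * v - A * (starRingEnd ℂ) B) * z * u)) +
        ((z * u - (starRingEnd ℂ) A * B) * A * (starRingEnd ℂ) B +
            -((z * u - (starRingEnd ℂ) A * B) * (starRingEnd ℂ) z * v) +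
          (z * u - (starRingEnd ℂ) A * B) * ((starRingEnd ℂ) z * v - A * (starRingEnd ℂ) B)) =
      -((z * u - (starRingEnd ℂ) A * B) * ((starRingEnd ℂ) z * v - A * (starRingEnd ℂ) B)) := by
    linear_combination -hAA
  rw [hEq] at h
  have hconj : (starRingEnd ℂ) (z * u - (starRingEnd ℂ) A * B) =
      (starRingEnd ℂ) z * v - A * (starRingEnd ℂ) B := by
    simp only [map_sub, map_mul, Complex.conj_conj, hcu]
  rw [← hconj, Complex.mul_conj] at h
  simp only [Complex.neg_re, Complex.ofReal_re, neg_nonneg] at h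
  have hd0 : z * u - (starRingEnd ℂ) A * B = 0 := by
    rw [← Complex.normSq_eq_zero]
    exact le_antisymm h (Complex.normSq_nonneg _)
  linear_combination (-B) * hAA + (-A) * hd0
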